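/- Fix L ≥ 3 and c ∈ (0,1), and suppose λ ∈ (0,1) satisfies λ^{1/(L−1) − 1}(λ² + c) = 1. Then c^{(L−1)/(L−2)} ≤ λ ≤ √(1 − c). -/

import Mathlib

/-- Localization of the shrinkage factors: for `L ≥ 3`, `c ∈ (0,1)` and `λ ∈ (0,1)`
with `λ^{(2−L)/(L−1)} (λ² + c) = 1`, one has `c^{(L−1)/(L−2)} ≤ λ ≤ √(1 − c)`. -/
theorem shrinkage_factor_bounds
    (L : ℕ) (hL : 3 ≤ L) (c : ℝ) (hc0 : 0 < c) (hc1 : c < 1)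
    (lam : ℝ) (hlam0 : 0 < lam) (hlam1 : lam < 1)
    (heq : lam ^ (((2 : ℝ) - L) / ((L : ℝ) - 1)) * (lam ^ 2 + c) = 1) :
    c ^ (((L : ℝ) - 1) / ((L : ℝ) - 2)) ≤ lam ∧ lam ≤ Real.sqrt (1 - c) := by
  have hL3 : (3 : ℝ) ≤ (L : ℝ) := by exact_mod_cast hL
  set b : ℝ := ((L : ℝ) - 2) / ((L : ℝ) - 1) with hbdef
  have hL1 : (0 : ℝ) < (L : ℝ) - 1 := by linarith
  have hL2 : (0 : ℝ) < (L : ℝ) - 2 := by linarith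
  have hb : 0 < b := div_pos hL2 hL1
  have hneg : ((2 : ℝ) - L) / ((L : ℝ) - 1) = -b := by
    rw [hbdef]; field_simp; ring
  have key : lam ^ 2 + c = lam ^ b := by
    have h1 : lam ^ (-b) * (lam ^ 2 + c) = 1 := by rw [← hneg]; exact heq
    have h2 : lam ^ (-b) * lam ^ b = 1 := by
      rw [← Real.rpow_add hlam0]; simp
    have hne : lam ^ (-b) ≠ 0 := (Real.rpow_pos_of_pos hlam0 _).ne'
    field_simp [Real.rpow_neg hlam0.le] at h1 h2 ⊢
    nlinarith [Real.rpow_pos_of_pos hlam0 b]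
  constructor
  · -- lower bound
    have hc_lt : c < lam ^ b := by nlinarith [sq_nonneg lam, key]
    have hinv : ((L : ℝ) - 1) / ((L : ℝ) - 2) = 1 / b := by
      rw [hbdef, one_div_div]
    rw [hinv]
    have := Real.rpow_le_rpow hc0.le hc_lt.le (le_of_lt (one_div_pos.mpr hb))
    rwa [← Real.rpow_mul hlam0.le, mul_one_div, div_self hb.ne', Real.rpow_one] at this
  · have hlt : lam ^ b < 1 := Real.rpow_lt_one hlam0.le hlam1 hb
    have : lam ^ 2 ≤ 1 - c := by linarith [key]
    rw [show lam ^ 2 = lam * lam by ring] at this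
    calc lam = Real.sqrt (lam * lam) := (Real.sqrt_mul_self hlam0.le).symm
      _ ≤ Real.sqrt (1 - c) := Real.sqrt_le_sqrt this
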